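/- arXiv:2102.01379 — 2 statements merged into one kernel-verified Lean document; each statement's English description precedes it below -/
import Mathlib

section
/- For every nonnegative integer n, the sum of the non-overlined parts counted without multiplicity (i.e., the sum over all overpartitions of n of the sum of the distinct sizes occurring among the non-overlined parts) equals ∑_{j=1}^{n} j · p̄(n−j). -/
/-- An overpartition of `n`: a pair consisting of a multiset of overlined parts (pairwise
distinct) and a multiset of non-overlined parts, all parts positive, with total sum `n`. -/
structure Overpartition (n : ℕ) where
  overlined : Multiset ℕ
  nonoverlined : Multiset ℕ
  overlined_nodup : overlined.Nodup
  overlined_pos : ∀ i ∈ overlined, 0 < i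
  nonoverlined_pos : ∀ i ∈ nonoverlined, 0 < i
  parts_sum : overlined.sum + nonoverlined.sum = n

/-- There are only finitely many overpartitions of `n`. -/
instance (n : ℕ) : Finite (Overpartition n) := by
  classical
  set big : Multiset ℕ := n • ((Multiset.range (n + 1))) with hbig
  have key : ∀ (m : Multiset ℕ), (∀ i ∈ m, 0 < i) → m.sum ≤ n → m ≤ big := by
    intro m hpos hsum
    rw [Multiset.le_iff_count]
    intro a
    rw [hbig, Multiset.count_nsmul]
    by_cases ha : a ∈ m
    · have ha1 : 0 < a := hpos a ha
      have hale : a ≤ m.sum := Multiset.le_sum_of_mem ha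
      have hcard : m.card ≤ m.sum := by
        have := Multiset.card_nsmul_le_sum (s := m) (a := 1) (fun i hi => hpos i hi)
        simpa using this
      have hcnt : m.count a ≤ m.card := Multiset.count_le_card a m
      have haa : a ∈ Multiset.range (n + 1) := Multiset.mem_range.2 (by omega)
      have h1 : Multiset.count a (Multiset.range (n + 1)) = 1 :=
        Multiset.count_eq_one_of_mem (Multiset.nodup_range _) haa
      rw [h1]
      omega
    · simp [Multiset.count_eq_zero_of_notMem ha]
  have hinj : Function.Injective (fun o : Overpartition n =>
      ((⟨o.overlined, Multiset.mem_powerset.2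
          (key _ o.overlined_pos (by have := o.parts_sum; omega))⟩,
        ⟨o.nonoverlined, Multiset.mem_powerset.2
          (key _ o.nonoverlined_pos (by have := o.parts_sum; omega))⟩) :
        {m // m ∈ big.powerset} × {m // m ∈ big.powerset})) := by
    intro a b h
    cases a; cases b
    simp_all
  exact Finite.of_injective _ hinj

/-- `S k n`: the total number of non-overlined parts equal to `k`, counted with
multiplicity, in all the overpartitions of `n`. -/
noncomputable def S (k n : ℕ) : ℕ := ∑ᶠ o : Overpartition n, o.nonoverlined.count k

/-- `pbar n`: the number of overpartitions of `n` (`pbar 0 = 1`). -/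
noncomputable def pbar (n : ℕ) : ℕ := Nat.card (Overpartition n)

/-- The multiset of all parts (overlined and non-overlined) of an overpartition. -/
def Overpartition.parts {n : ℕ} (o : Overpartition n) : Multiset ℕ :=
  o.overlined + o.nonoverlined

/-- `Mbar k n`: the number of overpartitions of `n` in which the first (i.e. largest) part
larger than `k` appears at least `k + 1` times. -/
noncomputable def Mbar (k n : ℕ) : ℕ :=
  Nat.card {o : Overpartition n // ∃ s ∈ o.parts, k < s ∧
    (∀ t ∈ o.parts, k < t → t ≤ s) ∧ k + 1 ≤ o.parts.count s}

lemma Overpartition.ext' {n : ℕ} {a b : Overpartition n}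
    (h1 : a.overlined = b.overlined) (h2 : a.nonoverlined = b.nonoverlined) : a = b := by
  cases a; cases b; dsimp at h1 h2; subst h1; subst h2; rfl

/-- Removing/adding one copy of `j` gives a bijection between overpartitions of `n`
containing `j` as a non-overlined part and overpartitions of `n - j`. -/
noncomputable def opEquiv (n j : ℕ) (hj : 1 ≤ j) (hjn : j ≤ n) :
    {o : Overpartition n // j ∈ o.nonoverlined} ≃ Overpartition (n - j) where
  toFun := fun ⟨o, h⟩ =>
    { overlined := o.overlined
      nonoverlined := o.nonoverlined.erase j
      overlined_nodup := o.overlined_nodup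
      overlined_pos := o.overlined_pos
      nonoverlined_pos := fun i hi => o.nonoverlined_pos i (Multiset.mem_of_mem_erase hi)
      parts_sum := by
        have hc : j ::ₘ o.nonoverlined.erase j = o.nonoverlined := Multiset.cons_erase h
        have hs : j + (o.nonoverlined.erase j).sum = o.nonoverlined.sum := by
          rw [← Multiset.sum_cons, hc]
        have := o.parts_sum
        omega }
  invFun := fun p =>
    ⟨{ overlined := p.overlined
       nonoverlined := j ::ₘ p.nonoverlined
       overlined_nodup := p.overlined_nodup
       overlined_pos := p.overlined_pos
       nonoverlined_pos := by
         intro i hi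
         rcases Multiset.mem_cons.1 hi with rfl | hi
         · exact hj
         · exact p.nonoverlined_pos i hi
       parts_sum := by
         rw [Multiset.sum_cons]
         have := p.parts_sum
         omega },
     Multiset.mem_cons_self _ _⟩
  left_inv := fun ⟨o, h⟩ => by
    apply Subtype.ext
    exact Overpartition.ext' rfl (Multiset.cons_erase h)
  right_inv := fun p =>
    Overpartition.ext' rfl (Multiset.erase_cons_head _ _)

theorem stmt8 (n : ℕ) :
    (∑ᶠ o : Overpartition n, ∑ s ∈ o.nonoverlined.toFinset, s)
      = ∑ j ∈ Finset.Icc 1 n, j * pbar (n - j) := by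
  classical
  have := Fintype.ofFinite (Overpartition n)
  rw [finsum_eq_sum_of_fintype]
  have key : ∀ o : Overpartition n, ∑ s ∈ o.nonoverlined.toFinset, s
      = ∑ j ∈ Finset.Icc 1 n, if j ∈ o.nonoverlined then j else 0 := by
    intro o
    rw [← Finset.sum_filter]
    congr 1
    ext s
    simp only [Finset.mem_filter, Finset.mem_Icc, Multiset.mem_toFinset]
    constructor
    · intro hs
      refine ⟨⟨o.nonoverlined_pos s hs, ?_⟩, hs⟩
      have h1 : s ≤ o.nonoverlined.sum := Multiset.le_sum_of_mem hs
      have := o.parts_sum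
      omega
    · exact fun h => h.2
  simp_rw [key]
  rw [Finset.sum_comm]
  apply Finset.sum_congr rfl
  intro j hj
  rw [Finset.mem_Icc] at hj
  rw [← Finset.sum_filter, Finset.sum_const, smul_eq_mul]
  have hcard : (Finset.univ.filter (fun o : Overpartition n => j ∈ o.nonoverlined)).card
      = pbar (n - j) := by
    rw [← Fintype.card_subtype, ← Nat.card_eq_fintype_card,
      Nat.card_congr (opEquiv n j hj.1 hj.2)]
    rfl
  rw [hcard, mul_comm]
end

section
/- For every nonnegative integer n, the number of squarefree non-overlined parts (counted with multiplicity) in all the overpartitions of n equals ∑_{j=1}^{n} 2^{ω(j)} · p̄(n−j), where ω(j) is the number of distinct prime divisors of j. -/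
/-- `A(|μ|,1,0;m) = ∑_{k=1}^{m} S(k,m) |μ(k)|`, the number of squarefree non-overlined
parts (counted with multiplicity) in all the overpartitions of `m`. -/
noncomputable def Amu (m : ℕ) : ℕ :=
  ∑ k ∈ Finset.Icc 1 m, S k m * (ArithmeticFunction.moebius k).natAbs

/-- `A(|μ|,1,0;·)` extended to integer arguments: terms with negative argument are zero. -/
noncomputable def Amuz (m : ℤ) : ℤ := if 0 ≤ m then (Amu m.toNat : ℤ) else 0

lemma sum_le_sum_of_mle {s t : Multiset ℕ} (h : s ≤ t) : s.sum ≤ t.sum := by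
  obtain ⟨u, rfl⟩ := Multiset.le_iff_exists_add.mp h
  simp [Multiset.sum_add]

lemma count_mul_le {n k : ℕ} (o : Overpartition n) :
    o.nonoverlined.count k * k ≤ n := by
  have hr : Multiset.replicate (o.nonoverlined.count k) k ≤ o.nonoverlined :=
    Multiset.le_count_iff_replicate_le.mp le_rfl
  have := sum_le_sum_of_mle hr
  rw [Multiset.sum_replicate, smul_eq_mul] at this
  have := o.parts_sum
  omega

/-- Removing `j` copies of the non-overlined part `k` is a bijection between overpartitions
of `n` with at least `j` non-overlined parts equal to `k` and overpartitions of `n - j*k`. -/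
noncomputable def equivRemove (k j n : ℕ) (hk : 0 < k) (hjk : j * k ≤ n) :
    {o : Overpartition n // j ≤ o.nonoverlined.count k} ≃ Overpartition (n - j * k) where
  toFun := fun ⟨o, h⟩ =>
    { overlined := o.overlined
      nonoverlined := o.nonoverlined - Multiset.replicate j k
      overlined_nodup := o.overlined_nodup
      overlined_pos := o.overlined_pos
      nonoverlined_pos := fun i hi =>
        o.nonoverlined_pos i (Multiset.mem_of_le (tsub_le_self) hi)
      parts_sum := by
        have hr : Multiset.replicate j k ≤ o.nonoverlined :=
          Multiset.le_count_iff_replicate_le.mp h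
        have hsum : (o.nonoverlined - Multiset.replicate j k).sum
            + (Multiset.replicate j k).sum = o.nonoverlined.sum := by
          rw [← Multiset.sum_add, tsub_add_cancel_of_le hr]
        have hrs : (Multiset.replicate j k).sum = j * k := by
          rw [Multiset.sum_replicate, smul_eq_mul]
        have := o.parts_sum
        omega }
  invFun := fun p =>
    ⟨{ overlined := p.overlined
       nonoverlined := p.nonoverlined + Multiset.replicate j k
       overlined_nodup := p.overlined_nodup
       overlined_pos := p.overlined_pos
       nonoverlined_pos := by
         intro i hi
         rcases Multiset.mem_add.mp hi with h | h
         · exact p.nonoverlined_pos i h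
         · rw [Multiset.eq_of_mem_replicate h]; exact hk
       parts_sum := by
         have hrs : (Multiset.replicate j k).sum = j * k := by
           rw [Multiset.sum_replicate, smul_eq_mul]
         have := p.parts_sum
         rw [Multiset.sum_add, hrs]
         omega },
     by
       show j ≤ Multiset.count k (p.nonoverlined + Multiset.replicate j k)
       rw [Multiset.count_add, Multiset.count_replicate_self]
       omega⟩
  left_inv := by
    rintro ⟨o, h⟩
    have hr : Multiset.replicate j k ≤ o.nonoverlined :=
      Multiset.le_count_iff_replicate_le.mp h
    apply Subtype.ext
    exact Overpartition.ext' rfl (tsub_add_cancel_of_le hr)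
  right_inv := by
    intro p
    exact Overpartition.ext' rfl (by simp)

lemma card_count_ge (k j n : ℕ) (hk : 0 < k) :
    Nat.card {o : Overpartition n // j ≤ o.nonoverlined.count k} =
      if j * k ≤ n then pbar (n - j * k) else 0 := by
  split
  · rename_i h
    rw [Nat.card_congr (equivRemove k j n hk h)]
    rfl
  · rename_i h
    have : IsEmpty {o : Overpartition n // j ≤ o.nonoverlined.count k} := by
      constructor
      rintro ⟨o, ho⟩
      have h1 : j * k ≤ o.nonoverlined.count k * k := Nat.mul_le_mul_right k ho
      have h2 := count_mul_le (k := k) o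
      omega
    simp [Nat.card_of_isEmpty]

lemma S_eq (k n : ℕ) (hk : 0 < k) :
    S k n = ∑ j ∈ Finset.Icc 1 n, if j * k ≤ n then pbar (n - j * k) else 0 := by
  classical
  have : Fintype (Overpartition n) := Fintype.ofFinite _
  rw [S, finsum_eq_sum_of_fintype]
  have hcount : ∀ o : Overpartition n, o.nonoverlined.count k =
      ∑ j ∈ Finset.Icc 1 n, if j ≤ o.nonoverlined.count k then 1 else 0 := by
    intro o
    have hc : o.nonoverlined.count k ≤ n := by
      have h1 := count_mul_le (k := k) o
      have : o.nonoverlined.count k ≤ o.nonoverlined.count k * k :=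
        Nat.le_mul_of_pos_right _ hk
      omega
    rw [← Finset.card_filter]
    have : Finset.filter (fun j => j ≤ o.nonoverlined.count k) (Finset.Icc 1 n)
        = Finset.Icc 1 (o.nonoverlined.count k) := by
      ext j
      simp only [Finset.mem_filter, Finset.mem_Icc]
      omega
    rw [this, Nat.card_Icc]
    omega
  calc ∑ o : Overpartition n, o.nonoverlined.count k
      = ∑ o : Overpartition n, ∑ j ∈ Finset.Icc 1 n,
          if j ≤ o.nonoverlined.count k then 1 else 0 := by
        exact Finset.sum_congr rfl fun o _ => hcount o
    _ = ∑ j ∈ Finset.Icc 1 n, ∑ o : Overpartition n,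
          if j ≤ o.nonoverlined.count k then 1 else 0 := Finset.sum_comm
    _ = ∑ j ∈ Finset.Icc 1 n, if j * k ≤ n then pbar (n - j * k) else 0 := by
        refine Finset.sum_congr rfl fun j _ => ?_
        rw [← card_count_ge k j n hk, Nat.card_eq_fintype_card, Fintype.card_subtype,
          Finset.card_filter]

lemma card_sqfree_divisors (m : ℕ) (hm : m ≠ 0) :
    (m.divisors.filter Squarefree).card = 2 ^ (Nat.primeFactors m).card := by
  classical
  have h := Nat.sum_divisors_filter_squarefree (n := m) hm (f := fun _ => (1 : ℕ))
  simp only [Finset.sum_const, smul_eq_mul, mul_one] at h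
  rw [h, Finset.card_powerset]
  congr 2
  rw [Nat.factors_eq, List.toFinset_coe, Nat.toFinset_factors]

lemma natAbs_moebius (k : ℕ) :
    (ArithmeticFunction.moebius k).natAbs = if Squarefree k then 1 else 0 := by
  by_cases h : Squarefree k
  · rw [ArithmeticFunction.moebius_apply_of_squarefree h, if_pos h]
    simp [Int.natAbs_pow]
  · rw [ArithmeticFunction.moebius_eq_zero_of_not_squarefree h, if_neg h]
    rfl

theorem stmt15 (n : ℕ) :
    Amu n = ∑ j ∈ Finset.Icc 1 n, 2 ^ (Nat.primeFactors j).card * pbar (n - j) := by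
  classical
  have key : Amu n = ∑ p ∈ (Finset.Icc 1 n ×ˢ Finset.Icc 1 n).filter
      (fun p => Squarefree p.1 ∧ p.2 * p.1 ≤ n), pbar (n - p.2 * p.1) := by
    rw [Amu]
    rw [Finset.sum_filter, Finset.sum_product]
    refine Finset.sum_congr rfl fun k hk => ?_
    have hk1 : 0 < k := by simp only [Finset.mem_Icc] at hk; omega
    rw [S_eq k n hk1, natAbs_moebius, Finset.sum_mul]
    refine Finset.sum_congr rfl fun j _ => ?_
    by_cases hs : Squarefree k <;> by_cases hjk : j * k ≤ n <;>
      simp [hs, hjk]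
  rw [key]
  have hmaps : ∀ p ∈ (Finset.Icc 1 n ×ˢ Finset.Icc 1 n).filter
      (fun p => Squarefree p.1 ∧ p.2 * p.1 ≤ n), p.2 * p.1 ∈ Finset.Icc 1 n := by
    intro p hp
    simp only [Finset.mem_filter, Finset.mem_product, Finset.mem_Icc] at hp ⊢
    exact ⟨Nat.mul_pos (by omega) (by omega), hp.2.2⟩
  rw [← Finset.sum_fiberwise_of_maps_to hmaps]
  refine Finset.sum_congr rfl fun m hm => ?_
  have hm' : 1 ≤ m ∧ m ≤ n := by simpa [Finset.mem_Icc] using hm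
  have step1 : ∑ p ∈ ((Finset.Icc 1 n ×ˢ Finset.Icc 1 n).filter
      (fun p => Squarefree p.1 ∧ p.2 * p.1 ≤ n)).filter (fun p => p.2 * p.1 = m),
      pbar (n - p.2 * p.1)
      = ∑ p ∈ ((Finset.Icc 1 n ×ˢ Finset.Icc 1 n).filter
      (fun p => Squarefree p.1 ∧ p.2 * p.1 ≤ n)).filter (fun p => p.2 * p.1 = m),
      pbar (n - m) := by
    refine Finset.sum_congr rfl fun p hp => ?_
    simp only [Finset.mem_filter] at hp
    rw [hp.2]
  rw [step1, Finset.sum_const, smul_eq_mul]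
  congr 1
  rw [← card_sqfree_divisors m (by omega)]
  refine (Finset.card_bij (fun k _ => (k, m / k)) ?_ ?_ ?_).symm
  · intro k hk
    simp only [Finset.mem_filter, Nat.mem_divisors] at hk
    obtain ⟨⟨hdvd, _⟩, hsq⟩ := hk
    have hk0 : 0 < k := hsq.ne_zero.bot_lt
    have hkm : k ≤ m := Nat.le_of_dvd (by omega) hdvd
    have hdiv : m / k * k = m := Nat.div_mul_cancel hdvd
    have hdivpos : 0 < m / k := Nat.div_pos hkm hk0
    have hdivle : m / k ≤ m := Nat.div_le_self _ _
    simp only [Finset.mem_filter, Finset.mem_product, Finset.mem_Icc]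
    exact ⟨⟨⟨⟨hk0, by omega⟩, ⟨hdivpos, by omega⟩⟩, hsq, by omega⟩, hdiv⟩
  · intro a ha b hb hab
    exact congrArg Prod.fst hab
  · rintro ⟨k, j⟩ hp
    simp only [Finset.mem_filter, Finset.mem_product, Finset.mem_Icc] at hp
    obtain ⟨⟨⟨⟨hk1, _⟩, ⟨hj1, _⟩⟩, hsq, _⟩, heq⟩ := hp
    refine ⟨k, ?_, ?_⟩
    · simp only [Finset.mem_filter, Nat.mem_divisors]
      exact ⟨⟨Dvd.intro_left j heq, by omega⟩, hsq⟩
    · have : j = m / k := by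
        rw [← heq, Nat.mul_div_cancel _ (by omega)]
      simp [this]
end
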